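/- Let A be an n×n real matrix, Q an n×n positive semidefinite real matrix, P̄ an n×n positive semidefinite real matrix, and h(X) = A X Aᵀ + Q. Let λ ∈ (0,1), and on a probability space let (λ_k)_{k≥1} be an i.i.d. sequence of {0,1}-valued random variables with P(λ_k = 1) = λ. Define the random matrices P_0 = P̄ and, for k ≥ 1, P_k = P̄ if λ_k = 1 and P_k = h(P_{k−1}) if λ_k = 0. Then for every k ≥ 0, E[trace(P_k)] = Σ_{i=0}^{k−1} λ(1−λ)^i · trace(h^i(P̄)) + (1−λ)^k · trace(h^k(P̄)). -/

import Mathlib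

open Matrix MeasureTheory ProbabilityTheory

/-- Length of the current dropout streak. -/
def streak (b : ℕ → Bool) : ℕ → ℕ
  | 0 => 0
  | k + 1 => if b (k + 1) then 0 else streak b k + 1

lemma streak_le (b : ℕ → Bool) : ∀ k, streak b k ≤ k
  | 0 => le_refl 0
  | k + 1 => by
      have := streak_le b k
      simp only [streak]
      split <;> omega

lemma streak_eq_iff (b : ℕ → Bool) :
    ∀ k j, j ≤ k → (streak b k = j ↔
      ((∀ i ∈ Finset.Ioc (k - j) k, b i = false) ∧ (j = k ∨ b (k - j) = true)))
  | 0, j, hj => by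
      interval_cases j
      simp [streak]
  | k + 1, 0, _ => by
      simp only [streak, Nat.sub_zero]
      have : Finset.Ioc (k + 1) (k + 1) = ∅ := by simp
      rw [this]
      constructor
      · intro h
        cases hb : b (k + 1) with
        | false => simp [hb] at h
        | true => simp [hb]
      · rintro ⟨-, h⟩
        rcases h with h | h
        · omega
        · simp [h]
  | k + 1, j + 1, hj => by
      have hj' : j ≤ k := by omega
      have IH := streak_eq_iff b k j hj'
      have hsub : k + 1 - (j + 1) = k - j := by omega
      have hIoc : Finset.Ioc (k - j) (k + 1) = insert (k + 1) (Finset.Ioc (k - j) k) := by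
        ext i
        simp only [Finset.mem_Ioc, Finset.mem_insert]
        omega
      rw [hsub, hIoc]
      simp only [streak, Finset.forall_mem_insert]
      constructor
      · intro h
        cases hb : b (k + 1) with
        | true => simp [hb] at h
        | false =>
            simp only [hb, if_neg Bool.false_ne_true, Nat.add_right_cancel_iff] at h
            obtain ⟨h1, h2⟩ := IH.mp h
            refine ⟨⟨rfl, h1⟩, ?_⟩
            rcases h2 with h2 | h2
            · exact Or.inl (by omega)
            · exact Or.inr h2
      · rintro ⟨⟨hb, h1⟩, h2⟩
        rw [hb, if_neg Bool.false_ne_true, Nat.add_right_cancel_iff]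
        refine IH.mpr ⟨h1, ?_⟩
        rcases h2 with h2 | h2
        · exact Or.inl (by omega)
        · exact Or.inr h2

theorem expected_trace_error_covariance {d : ℕ}
    (A Q Pbar : Matrix (Fin d) (Fin d) ℝ) (hQ : Q.PosSemidef) (hPbar : Pbar.PosSemidef)
    (lam_prob : ℝ) (hlam0 : 0 < lam_prob) (hlam1 : lam_prob < 1)
    {Ω : Type*} [MeasurableSpace Ω] (μ : Measure Ω) [IsProbabilityMeasure μ]
    (lam : ℕ → Ω → Bool) (hmeas : ∀ k, Measurable (lam k))
    (hindep : iIndepFun lam μ)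
    (hdist : ∀ k, 1 ≤ k → (μ {ω | lam k ω = true}).toReal = lam_prob)
    (P : ℕ → Ω → Matrix (Fin d) (Fin d) ℝ)
    (hP0 : ∀ ω, P 0 ω = Pbar)
    (hPrec : ∀ k ω, P (k + 1) ω =
      if lam (k + 1) ω = true then Pbar else A * P k ω * Aᵀ + Q)
    (k : ℕ) :
    ∫ ω, (P k ω).trace ∂μ =
      (∑ i ∈ Finset.range k,
        lam_prob * (1 - lam_prob) ^ i * ((fun Z => A * Z * Aᵀ + Q)^[i] Pbar).trace) +
      (1 - lam_prob) ^ k * ((fun Z => A * Z * Aᵀ + Q)^[k] Pbar).trace := by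
  set h : Matrix (Fin d) (Fin d) ℝ → Matrix (Fin d) (Fin d) ℝ :=
    fun Z => A * Z * Aᵀ + Q with hh
  set f : ℕ → ℝ := fun j => (h^[j] Pbar).trace with hf
  -- P in terms of streak
  have hPN : ∀ k ω, P k ω = h^[streak (fun i => lam i ω) k] Pbar := by
    intro k
    induction k with
    | zero => intro ω; simp [streak, hP0 ω]
    | succ n ih =>
        intro ω
        rw [hPrec n ω]
        by_cases hb : lam (n + 1) ω = true
        · simp [streak, hb]
        · simp only [Bool.not_eq_true] at hb
          simp only [streak, hb, if_neg Bool.false_ne_true,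
            Function.iterate_succ_apply', ih ω, hh]
  -- per-coordinate probabilities
  have hT : ∀ i : ℕ, 1 ≤ i → μ (lam i ⁻¹' {true}) = ENNReal.ofReal lam_prob := by
    intro i hi
    have h1 : (lam i ⁻¹' {true} : Set Ω) = {ω | lam i ω = true} := by
      ext ω; simp
    rw [h1, ← hdist i hi, ENNReal.ofReal_toReal (measure_ne_top μ _)]
  have hF : ∀ i : ℕ, 1 ≤ i →
      μ (lam i ⁻¹' {false}) = ENNReal.ofReal (1 - lam_prob) := by
    intro i hi
    have hc : (lam i ⁻¹' {false} : Set Ω) = (lam i ⁻¹' {true})ᶜ := by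
      ext ω; simp
    rw [hc, prob_compl_eq_one_sub ((hmeas i) (measurableSet_singleton true)), hT i hi,
      ENNReal.ofReal_sub 1 hlam0.le, ENNReal.ofReal_one]
  -- comap measurability
  have hcomap : ∀ (i : ℕ) (s : Set Bool),
      MeasurableSet[(inferInstance : MeasurableSpace Bool).comap (lam i)]
        (lam i ⁻¹' s) := by
    intro i s
    exact ⟨s, s.to_countable.measurableSet, rfl⟩
  -- probability of streak = j
  have hprob : ∀ j ≤ k, (μ {ω | streak (fun i => lam i ω) k = j}).toReal =
      if j = k then (1 - lam_prob) ^ k else lam_prob * (1 - lam_prob) ^ j := by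
    intro j hj
    by_cases hjk : j = k
    · subst hjk
      have hset : {ω | streak (fun i => lam i ω) j = j} =
          ⋂ i ∈ Finset.Ioc (j - j) j, lam i ⁻¹' {false} := by
        ext ω
        simp only [Set.mem_setOf_eq, streak_eq_iff (fun i => lam i ω) j j le_rfl,
          Set.mem_iInter, Set.mem_preimage, Set.mem_singleton_iff]
        tauto
      rw [hset, hindep.meas_biInter (fun i _ => hcomap i _)]
      have : ∀ i ∈ Finset.Ioc (j - j) j, μ (lam i ⁻¹' {false})
          = ENNReal.ofReal (1 - lam_prob) := by
        intro i hi
        simp only [Finset.mem_Ioc] at hi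
        exact hF i (by omega)
      rw [Finset.prod_congr rfl this, Finset.prod_const, Nat.card_Ioc]
      simp only [Nat.sub_self, Nat.sub_zero, eq_self_iff_true, if_true]
      rw [← ENNReal.ofReal_pow (by linarith),
        ENNReal.toReal_ofReal (pow_nonneg (by linarith) _)]
    · have hjlt : j < k := lt_of_le_of_ne hj hjk
      have hset : {ω | streak (fun i => lam i ω) k = j} =
          (lam (k - j) ⁻¹' {true}) ∩ ⋂ i ∈ Finset.Ioc (k - j) k, lam i ⁻¹' {false} := by
        ext ω
        simp only [Set.mem_setOf_eq, streak_eq_iff (fun i => lam i ω) k j hj,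
          Set.mem_inter_iff, Set.mem_iInter, Set.mem_preimage, Set.mem_singleton_iff]
        constructor
        · rintro ⟨h1, h2⟩
          rcases h2 with h2 | h2
          · omega
          · exact ⟨h2, fun i hi => h1 i hi⟩
        · rintro ⟨h2, h1⟩
          exact ⟨fun i hi => h1 i hi, Or.inr h2⟩
      have hIcc : Finset.Icc (k - j) k = insert (k - j) (Finset.Ioc (k - j) k) := by
        ext i
        simp only [Finset.mem_Icc, Finset.mem_insert, Finset.mem_Ioc]
        omega
      set B : ℕ → Set Bool := fun i => if i = k - j then {true} else {false} with hB
      have hset2 : {ω | streak (fun i => lam i ω) k = j} =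
          ⋂ i ∈ Finset.Icc (k - j) k, lam i ⁻¹' (B i) := by
        rw [hset, hIcc]
        rw [Finset.set_biInter_insert]
        congr 1
        · simp [hB]
        · apply Set.iInter₂_congr
          intro i hi
          simp only [Finset.mem_Ioc] at hi
          have : i ≠ k - j := by omega
          simp [hB, this]
      rw [hset2, hindep.meas_biInter (fun i _ => hcomap i _)]
      have hprod : ∏ i ∈ Finset.Icc (k - j) k, μ (lam i ⁻¹' B i) =
          ENNReal.ofReal lam_prob * ENNReal.ofReal (1 - lam_prob) ^ j := by
        rw [hIcc, Finset.prod_insert (by simp)]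
        have h1 : μ (lam (k - j) ⁻¹' B (k - j)) = ENNReal.ofReal lam_prob := by
          simp only [hB, if_pos rfl]
          exact hT (k - j) (by omega)
        have h2 : ∀ i ∈ Finset.Ioc (k - j) k, μ (lam i ⁻¹' B i)
            = ENNReal.ofReal (1 - lam_prob) := by
          intro i hi
          simp only [Finset.mem_Ioc] at hi
          have hne : i ≠ k - j := by omega
          simp only [hB, if_neg hne]
          exact hF i (by omega)
        rw [h1, Finset.prod_congr rfl h2, Finset.prod_const, Nat.card_Ioc]
        have hcard : k - (k - j) = j := by omega
        rw [hcard]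
      rw [hprod, if_neg hjk]
      rw [← ENNReal.ofReal_pow (by linarith), ← ENNReal.ofReal_mul hlam0.le,
        ENNReal.toReal_ofReal (mul_nonneg hlam0.le (pow_nonneg (by linarith) _))]
  -- measurability of the streak level sets
  have hmeasSet : ∀ j ≤ k, MeasurableSet {ω | streak (fun i => lam i ω) k = j} := by
    intro j hj
    by_cases hjk : j = k
    · subst hjk
      have hset : {ω | streak (fun i => lam i ω) j = j} =
          ⋂ i ∈ Finset.Ioc (j - j) j, lam i ⁻¹' {false} := by
        ext ω
        simp only [Set.mem_setOf_eq, streak_eq_iff (fun i => lam i ω) j j le_rfl,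
          Set.mem_iInter, Set.mem_preimage, Set.mem_singleton_iff]
        tauto
      rw [hset]
      exact Finset.measurableSet_biInter _
        (fun i _ => (hmeas i) (measurableSet_singleton false))
    · have hjlt : j < k := lt_of_le_of_ne hj hjk
      have hset : {ω | streak (fun i => lam i ω) k = j} =
          (lam (k - j) ⁻¹' {true}) ∩ ⋂ i ∈ Finset.Ioc (k - j) k, lam i ⁻¹' {false} := by
        ext ω
        simp only [Set.mem_setOf_eq, streak_eq_iff (fun i => lam i ω) k j hj,
          Set.mem_inter_iff, Set.mem_iInter, Set.mem_preimage, Set.mem_singleton_iff]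
        constructor
        · rintro ⟨h1, h2⟩
          rcases h2 with h2 | h2
          · omega
          · exact ⟨h2, fun i hi => h1 i hi⟩
        · rintro ⟨h2, h1⟩
          exact ⟨fun i hi => h1 i hi, Or.inr h2⟩
      rw [hset]
      exact ((hmeas (k - j)) (measurableSet_singleton true)).inter
        (Finset.measurableSet_biInter _
          (fun i _ => (hmeas i) (measurableSet_singleton false)))
  -- rewrite the integrand as a finite sum of indicators
  have hint : (fun ω => (P k ω).trace) = fun ω =>
      ∑ j ∈ Finset.range (k + 1),
        Set.indicator {ω' | streak (fun i => lam i ω') k = j} (fun _ => f j) ω := by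
    funext ω
    rw [hPN k ω]
    have hle : streak (fun i => lam i ω) k ∈ Finset.range (k + 1) := by
      simp [Nat.lt_succ_iff, streak_le]
    rw [Finset.sum_eq_single (streak (fun i => lam i ω) k)]
    · simp [Set.indicator_apply, hf]
    · intro j _ hne
      simp [Set.indicator_apply, Ne.symm hne]
    · intro hnot
      exact absurd hle hnot
  rw [hint, integral_finset_sum _ (fun j hj =>
    (integrable_const (f j)).indicator (hmeasSet j (by simpa [Nat.lt_succ_iff] using hj)))]
  have hterm : ∀ j ∈ Finset.range (k + 1),
      ∫ ω, Set.indicator {ω' | streak (fun i => lam i ω') k = j} (fun _ => f j) ω ∂μ =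
      (if j = k then (1 - lam_prob) ^ k else lam_prob * (1 - lam_prob) ^ j) * f j := by
    intro j hj
    have hjk : j ≤ k := by simpa [Nat.lt_succ_iff] using hj
    rw [integral_indicator_const (f j) (hmeasSet j hjk), smul_eq_mul, measureReal_def, hprob j hjk]
  rw [Finset.sum_congr rfl hterm, Finset.sum_range_succ, if_pos rfl]
  congr 1
  apply Finset.sum_congr rfl
  intro j hj
  simp only [Finset.mem_range] at hj
  rw [if_neg (by omega)]
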